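/- Let (x, y) ∈ ℝ² with y ≠ 0, and assume P′(x² + α + b) > 0 for every α > 0. Then there is at most one triple (u, v, w) ∈ ℝ³ with u ≠ 0 satisfying the four constraints: w = x² + u² + b; v² + y² = P(w); vu + xy = 0; and vx − uy > 0. -/

import Mathlib

/-- (Uniqueness of the reduced triple under the
Harvey–Lawson-type gauge fixing.) With `P w = w * ∏ j, (w + a j)`, if `y ≠ 0`
and `P′(x² + α + b) > 0` for all `α > 0`, then at most one triple `(u, v, w)`
with `u ≠ 0` satisfies `w = x² + u² + b`, `v² + y² = P w`, `v u + x y = 0` and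
`v x - u y > 0`. -/
theorem statement8 (n : ℕ) (hn : 3 ≤ n) (a : Fin (n - 2) → ℝ) (b : ℝ)
    (P : ℝ → ℝ) (hP : ∀ x : ℝ, P x = x * ∏ j, (x + a j))
    (x y : ℝ) (hy : y ≠ 0)
    (hP' : ∀ α : ℝ, 0 < α → 0 < deriv P (x ^ 2 + α + b)) :
    ∀ u₁ v₁ w₁ u₂ v₂ w₂ : ℝ,
      u₁ ≠ 0 → w₁ = x ^ 2 + u₁ ^ 2 + b → v₁ ^ 2 + y ^ 2 = P w₁ →
        v₁ * u₁ + x * y = 0 → 0 < v₁ * x - u₁ * y →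
      u₂ ≠ 0 → w₂ = x ^ 2 + u₂ ^ 2 + b → v₂ ^ 2 + y ^ 2 = P w₂ →
        v₂ * u₂ + x * y = 0 → 0 < v₂ * x - u₂ * y →
      u₁ = u₂ ∧ v₁ = v₂ ∧ w₁ = w₂ := by
  intro u₁ v₁ w₁ u₂ v₂ w₂ hu₁ hw₁ hv₁ hvu₁ hpos₁ hu₂ hw₂ hv₂ hvu₂ hpos₂
  have hPfun : P = fun t => t * ∏ j, (t + a j) := funext hP
  have hPdiff : Differentiable ℝ P := by
    rw [hPfun]; fun_prop
  set F : ℝ → ℝ := fun s => P (x ^ 2 + s + b) - x ^ 2 * y ^ 2 / s - y ^ 2 with hF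
  have hFderiv : ∀ s : ℝ, 0 < s →
      HasDerivAt F (deriv P (x ^ 2 + s + b) + x ^ 2 * y ^ 2 / s ^ 2) s := by
    intro s hs
    have h1 : HasDerivAt (fun s : ℝ => x ^ 2 + s + b) 1 s := by
      simpa using ((hasDerivAt_id s).const_add (x ^ 2)).add_const b
    have h2 : HasDerivAt (fun s : ℝ => P (x ^ 2 + s + b)) (deriv P (x ^ 2 + s + b)) s := by
      simpa [Function.comp_def] using ((hPdiff (x ^ 2 + s + b)).hasDerivAt.comp s h1)
    have h3 : HasDerivAt (fun s : ℝ => x ^ 2 * y ^ 2 / s) (-(x ^ 2 * y ^ 2) / s ^ 2) s := by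
      have h := (hasDerivAt_inv hs.ne').const_mul (x ^ 2 * y ^ 2)
      have heq : (fun s : ℝ => x ^ 2 * y ^ 2 / s) = fun t : ℝ => x ^ 2 * y ^ 2 * t⁻¹ := by
        funext t; rw [div_eq_mul_inv]
      rw [heq]
      exact h.congr_deriv (by ring)
    have h4 := (h2.sub h3).sub_const (y ^ 2)
    exact h4.congr_deriv (by ring)
  have hmono : StrictMonoOn F (Set.Ioi 0) := by
    apply strictMonoOn_of_deriv_pos (convex_Ioi 0)
    · intro s hs
      exact (hFderiv s hs).continuousAt.continuousWithinAt
    · intro s hs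
      rw [interior_Ioi] at hs
      rw [(hFderiv s hs).deriv]
      have hp := hP' s hs
      have hq : 0 ≤ x ^ 2 * y ^ 2 / s ^ 2 := by positivity
      linarith
  have hs₁ : (0:ℝ) < u₁ ^ 2 := by positivity
  have hs₂ : (0:ℝ) < u₂ ^ 2 := by positivity
  have hvsq₁ : v₁ ^ 2 = x ^ 2 * y ^ 2 / u₁ ^ 2 := by
    rw [eq_div_iff hs₁.ne']
    linear_combination (v₁ * u₁ - x * y) * hvu₁
  have hvsq₂ : v₂ ^ 2 = x ^ 2 * y ^ 2 / u₂ ^ 2 := by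
    rw [eq_div_iff hs₂.ne']
    linear_combination (v₂ * u₂ - x * y) * hvu₂
  have hF₁ : F (u₁ ^ 2) = 0 := by
    simp only [hF]
    rw [← hw₁, ← hv₁, hvsq₁]; ring
  have hF₂ : F (u₂ ^ 2) = 0 := by
    simp only [hF]
    rw [← hw₂, ← hv₂, hvsq₂]; ring
  have hsq : u₁ ^ 2 = u₂ ^ 2 :=
    hmono.injOn (Set.mem_Ioi.mpr hs₁) (Set.mem_Ioi.mpr hs₂) (hF₁.trans hF₂.symm)
  have hcases : u₁ = u₂ ∨ u₁ = -u₂ := by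
    have h : (u₁ - u₂) * (u₁ + u₂) = 0 := by nlinarith
    rcases mul_eq_zero.mp h with h | h
    · left; linarith
    · right; linarith
  rcases hcases with h | h
  · refine ⟨h, ?_, by rw [hw₁, hw₂, h]⟩
    have : (v₁ - v₂) * u₂ = 0 := by
      have := hvu₁
      rw [h] at this
      linarith [hvu₂]
    rcases mul_eq_zero.mp this with h' | h'
    · linarith
    · exact absurd h' hu₂
  · exfalso
    have hveq : v₁ = -v₂ := by
      have h1 : v₁ * (-u₂) + x * y = 0 := by rw [← h]; exact hvu₁
      have : (v₁ + v₂) * u₂ = 0 := by linarith [hvu₂]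
      rcases mul_eq_zero.mp this with h' | h'
      · linarith
      · exact absurd h' hu₂
    rw [hveq, h] at hpos₁
    linarith
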